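/- Let Σ be a finite alphabet with |Σ| = σ ≥ 2, let k be a natural number, and let w be a word over Σ with alph(w) = Σ and k > ι(w) such that for every word w' over Σ with ι(w') = ι(w) we have |ScatFact_k(w)| ≥ |ScatFact_k(w')|. Then for every i ∈ [ι(w)], the inner of the i-th arch, inner_i(w), is (k − ι(w))-universal over the alphabet Σ \ {m(w)[i]}. -/

import Mathlib

open List

universe u
variable {α : Type u}

/-- `ScatFact k w` is the set of scattered factors (subsequences) of `w` of length exactly `k`. -/
def ScatFact (k : ℕ) (w : List α) : Set (List α) :=
  {v | v.length = k ∧ v.Sublist w}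

/-- `w` is `k`-universal over the alphabet `S`: every word of length `k` over `S`
is a scattered factor of `w`. -/
def IsKUniversal [DecidableEq α] (S : Finset α) (k : ℕ) (w : List α) : Prop :=
  ∀ v : List α, v.length = k → (∀ x ∈ v, x ∈ S) → v.Sublist w

/-- The universality index of `w` over the alphabet `S`: the largest `k` such that
`w` is `k`-universal over `S`. -/
noncomputable def univIdx [DecidableEq α] (S : Finset α) (w : List α) : ℕ :=
  sSup {k | IsKUniversal S k w}

/-- `IsArchFact S w inners modus rest` says that `w` has the arch factorization
`w = ar_1 ⋯ ar_n · rest` over the alphabet `S`, where the `i`-th arch is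
`ar_i = inners[i] ++ [modus[i]]`: each arch contains every letter of `S`,
the last letter of each arch occurs only once within the arch, and the
alphabet of the rest is a proper subset of `S`. -/
def IsArchFact [DecidableEq α] (S : Finset α) (w : List α)
    (inners : List (List α)) (modus : List α) (rest : List α) : Prop :=
  inners.length = modus.length ∧
  w = (List.zipWith (fun inn m => inn ++ [m]) inners modus).flatten ++ rest ∧
  (∀ p ∈ List.zip inners modus, ∀ x ∈ S, x ∈ p.1 ++ [p.2]) ∧
  (∀ p ∈ List.zip inners modus, p.2 ∉ p.1) ∧
  rest.toFinset ⊂ S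

/-- `v` is perfect `k`-universal over `S`: `alph(v) = S`, the universality index of `v`
over `S` is `k`, and the rest of its arch factorization over `S` is empty. -/
def IsPerfectUniv [DecidableEq α] (S : Finset α) (k : ℕ) (v : List α) : Prop :=
  v.toFinset = S ∧ univIdx S v = k ∧ ∃ inners modus, IsArchFact S v inners modus []

/-- `v` is minimal perfect `k`-universal over `S`. -/
def IsMinPerfectUniv [DecidableEq α] (S : Finset α) (k : ℕ) (v : List α) : Prop :=
  IsPerfectUniv S k v ∧ ∀ v' : List α, IsPerfectUniv S k v' → v.length ≤ v'.length

/-- `nextAlphPos w i s` (positions `1`-indexed): the least position `j` such that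
`w[i+1..j]` contains exactly `s` distinct letters, or `none` (representing `-1`)
if `w[i+1..|w|]` contains fewer than `s` distinct letters. -/
noncomputable def nextAlphPos [DecidableEq α] (w : List α) (i s : ℕ) : Option ℕ :=
  if (w.drop i).toFinset.card < s then none
  else some (sInf {j | ((w.drop i).take (j - i)).toFinset.card = s})

/-- The letter of `w` at (1-indexed) position `j`. -/
def letterAt [Inhabited α] (w : List α) (j : ℕ) : α := w.getD (j - 1) default

/-- The word over `Fin σ` with `ι` arches, whose first arch is `a_1 a_2 ⋯ a_σ`
and each later arch is the reverse of the previous one. -/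
def wmin (σ ι : ℕ) : List (Fin σ) :=
  ((List.range ι).map (fun i =>
    if i % 2 = 0 then List.finRange σ else (List.finRange σ).reverse)).flatten

/-- kernel: if `a ∉ X` then embedding `a :: s` into `X ++ a :: Y` forces `s <+ Y`. -/
lemma my_ker {a : α} : ∀ (X : List α) {s Y : List α}, a ∉ X → a :: s <+ X ++ a :: Y → s <+ Y := by
  intro X
  induction X with
  | nil =>
    intro s Y _ h
    cases h with
    | cons _ h' => exact (sublist_cons_self a s).trans h'
    | cons_cons _ h' => exact h'
  | cons x X ih =>
    intro s Y hx h
    rw [cons_append] at h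
    cases h with
    | cons _ h' => exact ih (fun hm => hx (mem_cons_of_mem x hm)) h'
    | cons_cons _ h' => exact absurd mem_cons_self hx

lemma my_cons_sublist_tail {a : α} : ∀ {L s : List α}, a :: s <+ L → s <+ L.tail := by
  intro L
  induction L with
  | nil => intro s h; exact absurd h (by simp)
  | cons b L ih =>
    intro s h
    cases h with
    | cons _ h' => exact (sublist_cons_self a s).trans h'
    | cons_cons _ h' => exact h'

/-- embedding a short word arch-by-arch -/
lemma my_emb : ∀ (I : List (List α)) (M : List α) (s : List α),
    I.length = M.length →
    (∀ p ∈ List.zip I M, ∀ x : α, x ∈ p.1 ++ [p.2]) →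
    s.length ≤ I.length →
    s <+ (List.zipWith (fun inn m => inn ++ [m]) I M).flatten := by
  intro I
  induction I with
  | nil =>
    intro M s _ _ hs
    have : s = [] := by simpa using hs
    simp [this]
  | cons J I' ih =>
    intro M s hlen hc hs
    match M with
    | [] => simp at hlen
    | g :: M' =>
      match s with
      | [] => exact nil_sublist _
      | a :: s' =>
        have h1 : [a] <+ J ++ [g] := singleton_sublist.mpr (hc (J, g) (by simp) a)
        have h2 := ih M' s' (by simpa using hlen)
          (fun p hp x => hc p (by simp [hp]) x) (by simpa using hs)
        simpa using h1.append h2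

/-- forced prefix lemma -/
lemma my_fp : ∀ (I : List (List α)) (M : List α) (X s : List α),
    I.length = M.length →
    (∀ p ∈ List.zip I M, p.2 ∉ p.1) →
    M ++ s <+ (List.zipWith (fun inn m => inn ++ [m]) I M).flatten ++ X →
    s <+ X := by
  intro I
  induction I with
  | nil =>
    intro M s X hlen _ h
    have : M = [] := by simpa using hlen.symm
    simpa [this] using h
  | cons J I' ih =>
    intro M X s hlen hc h
    match M with
    | [] => simp at hlen
    | g :: M' =>
      have hgJ : g ∉ J := hc (J, g) (by simp)
      have h' : g :: (M' ++ s) <+ J ++ g :: ((List.zipWith (fun inn m => inn ++ [m]) I' M').flatten ++ X) := by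
        simpa [List.append_assoc] using h
      exact ih M' X s (by simpa using hlen) (fun p hp => hc p (by simp [hp])) (my_ker J hgJ h')

section UnivIdx
variable [DecidableEq α] [Fintype α]

lemma my_bdd (a0 : α) (W : List α) : BddAbove {j | IsKUniversal Finset.univ j W} := by
  refine ⟨W.length, fun j hj => ?_⟩
  have := hj (List.replicate j a0) (by simp) (by intro x _; exact Finset.mem_univ x)
  simpa using this.length_le

lemma my_zero_mem (W : List α) : (0 : ℕ) ∈ {j | IsKUniversal Finset.univ j W} := by
  intro s hs _
  rw [List.length_eq_zero_iff] at hs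
  simp [hs]

lemma my_univIdx_mono (a0 : α) {T W : List α} (h : T <+ W) :
    univIdx Finset.univ T ≤ univIdx Finset.univ W := by
  apply csSup_le_csSup (my_bdd a0 W) ⟨0, my_zero_mem T⟩
  intro j hj s h1 h2
  exact (hj s h1 h2).trans h

lemma my_not_kuniv (a0 : α) {W : List α} {j : ℕ} (h : univIdx Finset.univ W < j) :
    ¬ IsKUniversal Finset.univ j W := fun hK => by
  have := le_csSup (my_bdd a0 W) hK
  rw [show sSup {j | IsKUniversal Finset.univ j W} = univIdx Finset.univ W from rfl] at this
  omega

lemma my_univIdx_eq (a0 : α) (I : List (List α)) (M R v : List α)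
    (h : IsArchFact Finset.univ v I M R) : univIdx Finset.univ v = I.length := by
  obtain ⟨h1, h2, h3, h4, h5⟩ := h
  have hup : ∀ j ≤ I.length, IsKUniversal Finset.univ j v := by
    intro j hj s hslen _
    have hs : s <+ (List.zipWith (fun inn m => inn ++ [m]) I M).flatten :=
      my_emb I M s h1 (fun p hp x => h3 p hp x (Finset.mem_univ x)) (by omega)
    rw [h2]
    exact hs.trans (sublist_append_left _ R)
  obtain ⟨c, hcu, hcR⟩ := Finset.exists_of_ssubset h5
  have hdown : ¬ IsKUniversal Finset.univ (I.length + 1) v := by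
    intro hK
    have hMc := hK (M ++ [c]) (by simp [h1.symm]) (by intro x _; exact Finset.mem_univ x)
    rw [h2] at hMc
    have hcRmem : [c] <+ R := my_fp I M R [c] h1 h4 hMc
    exact hcR (List.mem_toFinset.mpr (singleton_sublist.mp hcRmem))
  have hset : {j | IsKUniversal Finset.univ j v} = Set.Iic I.length := by
    ext j
    simp only [Set.mem_setOf_eq, Set.mem_Iic]
    constructor
    · intro hj
      by_contra hgt
      push_neg at hgt
      apply hdown
      intro s hslen _
      have hj' := hj (s ++ List.replicate (j - (I.length + 1)) a0)
        (by simp [hslen]; omega) (by intro x _; exact Finset.mem_univ x)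
      exact (sublist_append_left s _).trans hj'
    · intro hj; exact hup j hj
  rw [univIdx, hset, csSup_Iic]

end UnivIdx

lemma my_zip_split : ∀ {l : List (List α)} {l' : List α} {p : List α × α}, p ∈ List.zip l l' →
    ∃ (l₁ l₂ : List (List α)) (m₁ m₂ : List α),
      l = l₁ ++ p.1 :: l₂ ∧ l' = m₁ ++ p.2 :: m₂ ∧ l₁.length = m₁.length := by
  intro l
  induction l with
  | nil => intro l' p h; simp [List.zip] at h
  | cons J l ih =>
    intro l' p h
    match l' with
    | [] => simp [List.zip] at h
    | g :: l' =>
      rw [List.zip_cons_cons, List.mem_cons] at h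
      rcases h with h | h
      · exact ⟨[], l, [], l', by simp [h], by simp [h], rfl⟩
      · obtain ⟨l₁, l₂, m₁, m₂, e1, e2, e3⟩ := ih h
        exact ⟨J :: l₁, l₂, g :: m₁, m₂, by simp [e1], by simp [e2], by simp [e3]⟩

lemma my_split_first {m : α} : ∀ {z : List α}, m ∈ z → ∃ y ζ, z = y ++ m :: ζ ∧ m ∉ y := by
  intro z
  induction z with
  | nil => simp
  | cons b z ih =>
    intro h
    by_cases hb : b = m
    · exact ⟨[], z, by simp [hb], by simp⟩
    · have hmz : m ∈ z := by
        rcases List.mem_cons.mp h with h' | h'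
        · exact absurd h'.symm hb
        · exact h'
      obtain ⟨y, ζ, e, hm⟩ := ih hmz
      refine ⟨b :: y, ζ, by simp [e], ?_⟩
      intro hc
      rcases List.mem_cons.mp hc with h' | h'
      · exact hb h'.symm
      · exact hm h'

theorem stmt4 {α : Type u} [Fintype α] [DecidableEq α]
    (hsigma : 2 ≤ Fintype.card α) (k : ℕ) (w : List α) (halph : ∀ a : α, a ∈ w)
    (hk : univIdx Finset.univ w < k)
    (hmax : ∀ w' : List α, univIdx Finset.univ w' = univIdx Finset.univ w →
        (ScatFact k w').ncard ≤ (ScatFact k w).ncard)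
    (inners : List (List α)) (modus : List α) (rest : List α)
    (hfact : IsArchFact Finset.univ w inners modus rest) :
    ∀ p ∈ List.zip inners modus,
      IsKUniversal (Finset.univ \ {p.2}) (k - univIdx Finset.univ w) p.1 := by
  have hne : Nonempty α := Fintype.card_pos_iff.mp (by omega)
  obtain ⟨a0⟩ := hne
  rintro ⟨A, m⟩ hp
  by_contra hcon
  obtain ⟨h1, h2, h3, h4, h5⟩ := hfact
  have hι : univIdx Finset.univ w = inners.length :=
    my_univIdx_eq a0 inners modus rest w ⟨h1, h2, h3, h4, h5⟩
  set n := inners.length with hn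
  -- extract a counterexample word t
  rw [IsKUniversal] at hcon
  push_neg at hcon
  obtain ⟨t, htlen, htmem, htA⟩ := hcon
  have htm : ∀ x ∈ t, x ≠ m := by
    intro x hx
    have := htmem x hx
    simp at this
    exact this
  rw [hι] at htlen hk
  have htpos : t ≠ [] := by
    intro h
    rw [h] at htlen
    simp at htlen
    omega
  -- split position
  obtain ⟨I₁, I₂, M₁, M₂, eI, eM, elen⟩ := my_zip_split hp
  simp only at eI eM
  -- the zip splits
  have hzipeq : List.zip inners modus = List.zip I₁ M₁ ++ (A, m) :: List.zip I₂ M₂ := by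
    rw [eI, eM, List.zip_append elen, List.zip_cons_cons]
  have h3' : ∀ x : α, x ∈ A ++ [m] := fun x => h3 (A, m) (by rw [hzipeq]; simp) x (Finset.mem_univ x)
  have h4' : m ∉ A := h4 (A, m) (by rw [hzipeq]; simp)
  -- lengths
  have hlenI : n = I₁.length + 1 + I₂.length := by rw [hn, eI]; simp; omega
  have hlenM : modus.length = M₁.length + 1 + M₂.length := by rw [eM]; simp; omega
  have hlen2 : I₂.length = M₂.length := by omega
  -- decomposition of w
  have eQ : List.zipWith (fun inn mm => inn ++ [mm]) inners modus
      = List.zipWith (fun inn mm => inn ++ [mm]) I₁ M₁ ++ (A ++ [m]) ::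
        List.zipWith (fun inn mm => inn ++ [mm]) I₂ M₂ := by
    rw [eI, eM, List.zipWith_append elen, List.zipWith_cons_cons]
  set P := (List.zipWith (fun inn mm => inn ++ [mm]) I₁ M₁).flatten with hP
  set Q := (List.zipWith (fun inn mm => inn ++ [mm]) I₂ M₂).flatten with hQ
  set W₀ := Q ++ rest with hW₀
  have ew : w = P ++ ((A ++ [m]) ++ W₀) := by
    rw [h2, eQ]
    simp [hP, hQ, hW₀, List.append_assoc]
  -- arch fact for W₀
  have hfactW : IsArchFact Finset.univ W₀ I₂ M₂ rest := by
    refine ⟨hlen2, rfl, ?_, ?_, h5⟩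
    · intro p hpp x hx
      exact h3 p (by rw [hzipeq]; simp [hpp]) x hx
    · intro p hpp
      exact h4 p (by rw [hzipeq]; simp [hpp])
  have hιW : univIdx Finset.univ W₀ = I₂.length := my_univIdx_eq a0 I₂ M₂ rest W₀ hfactW
  -- obtain z
  have hnk : ¬ IsKUniversal Finset.univ (I₂.length + 1) W₀.tail := by
    apply my_not_kuniv a0
    have := my_univIdx_mono a0 (List.tail_sublist W₀)
    omega
  rw [IsKUniversal] at hnk
  push_neg at hnk
  obtain ⟨z, hzlen, -, hzT⟩ := hnk
  -- choose u and prove embedding of t ++ z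
  have key : ∃ u : List α, (∀ x ∈ u, x ≠ m) ∧ (t ++ z) <+ u ++ m :: W₀ := by
    by_cases hmz : m ∈ z
    · obtain ⟨y, ζ, ez, hmy⟩ := my_split_first hmz
      refine ⟨t ++ y, ?_, ?_⟩
      · intro x hx
        rcases List.mem_append.mp hx with h' | h'
        · exact htm x h'
        · intro hc; rw [hc] at h'; exact hmy h'
      · have hζQ : ζ <+ Q :=
          my_emb I₂ M₂ ζ hlen2 (fun p hpp x => h3 p (by rw [hzipeq]; simp [hpp]) x (Finset.mem_univ x))
            (by have := congrArg List.length ez; simp at this; omega)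
        have hζW : ζ <+ W₀ := hζQ.trans (List.sublist_append_left Q rest)
        have : (t ++ y) ++ m :: ζ <+ (t ++ y) ++ m :: W₀ :=
          (Sublist.refl (t ++ y)).append (hζW.cons₂ m)
        simpa [ez, List.append_assoc] using this
    · refine ⟨t ++ z, ?_, List.sublist_append_left _ _⟩
      intro x hx
      rcases List.mem_append.mp hx with h' | h'
      · exact htm x h'
      · intro hc; rw [hc] at h'; exact hmz h'
  obtain ⟨u, hum, htzu⟩ := key
  -- build w'
  set inners' := I₁ ++ (A ++ u) :: I₂ with hinners'
  set w' := (List.zipWith (fun inn mm => inn ++ [mm]) inners' modus).flatten ++ rest with hw'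
  have hzipeq' : List.zip inners' modus = List.zip I₁ M₁ ++ (A ++ u, m) :: List.zip I₂ M₂ := by
    rw [hinners', eM, List.zip_append elen, List.zip_cons_cons]
  have hfact' : IsArchFact Finset.univ w' inners' modus rest := by
    refine ⟨?_, rfl, ?_, ?_, h5⟩
    · rw [hinners', eM]; simp; omega
    · intro p hpp x hx
      rw [hzipeq'] at hpp
      rcases List.mem_append.mp hpp with h' | h'
      · exact h3 p (by rw [hzipeq]; simp [h']) x hx
      · rcases List.mem_cons.mp h' with h'' | h''
        · subst h''
          have := h3' x
          simp only [List.mem_append, List.mem_singleton] at this ⊢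
          tauto
        · exact h3 p (by rw [hzipeq]; simp [h'']) x hx
    · intro p hpp
      rw [hzipeq'] at hpp
      rcases List.mem_append.mp hpp with h' | h'
      · exact h4 p (by rw [hzipeq]; simp [h'])
      · rcases List.mem_cons.mp h' with h'' | h''
        · subst h''
          simp only [List.mem_append]
          rintro (hc | hc)
          · exact h4' hc
          · exact hum m hc rfl
        · exact h4 p (by rw [hzipeq]; simp [h''])
  have hlen' : inners'.length = n := by rw [hinners']; simp; omega
  have hι' : univIdx Finset.univ w' = n := by
    rw [my_univIdx_eq a0 inners' modus rest w' hfact', hlen']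
  -- w' decomposition
  have ew' : w' = P ++ ((A ++ u) ++ m :: W₀) := by
    rw [hw', hinners', eM, List.zipWith_append elen, List.zipWith_cons_cons]
    simp [hP, hQ, hW₀, List.append_assoc]
  -- w <+ w'
  have hsub : w <+ w' := by
    rw [ew, ew']
    refine (Sublist.refl P).append ?_
    have : A ++ ([m] ++ W₀) <+ A ++ (u ++ ([m] ++ W₀)) :=
      (Sublist.refl A).append (List.sublist_append_right u _)
    simpa [List.append_assoc] using this
  -- the witness word v
  set v := M₁ ++ (t ++ z) with hv
  have hM₁len : M₁.length = I₁.length := elen.symm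
  have hvlen : v.length = k := by
    rw [hv]
    simp [htlen, hzlen, hM₁len]
    omega
  have hvw' : v <+ w' := by
    rw [ew', hv]
    refine Sublist.append ?_ ?_
    · exact my_emb I₁ M₁ M₁ elen
        (fun p hpp x => h3 p (by rw [hzipeq]; simp [hpp]) x (Finset.mem_univ x)) (by omega)
    · have := htzu.trans (List.sublist_append_right A (u ++ m :: W₀))
      simpa [List.append_assoc] using this
  -- v is not a scattered factor of w
  have hvw : ¬ v <+ w := by
    intro hvsub
    rw [ew, hv] at hvsub
    have h6 : t ++ z <+ A ++ m :: W₀ :=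
      my_fp I₁ M₁ (A ++ m :: W₀) (t ++ z) elen
        (fun p hpp => h4 p (by rw [hzipeq]; simp [hpp]))
        (by simpa [List.append_assoc] using hvsub)
    obtain ⟨s₁, s₂, e12, hs₁, hs₂⟩ := List.sublist_append_iff.mp h6
    by_cases hle : t.length ≤ s₁.length
    · apply htA
      have he : t = s₁.take t.length := by
        have := congrArg (List.take t.length) e12
        rw [List.take_append_of_le_length hle, List.take_left] at this
        exact this
      exact he ▸ ((List.take_sublist _ _).trans hs₁)
    · push_neg at hle
      have hdrop : s₂ = t.drop s₁.length ++ z := by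
        have := congrArg (List.drop s₁.length) e12
        rw [List.drop_append_of_le_length (le_of_lt hle), List.drop_left] at this
        exact this.symm
      have hne2 : t.drop s₁.length ≠ [] := by
        intro hcc
        have := congrArg List.length hcc
        simp at this
        omega
      obtain ⟨hh, tt, edrop⟩ := List.exists_cons_of_ne_nil hne2
      have hhm : hh ≠ m := htm hh (List.mem_of_mem_drop (edrop ▸ (List.mem_cons_self : hh ∈ hh :: tt)))
      rw [hdrop, edrop, List.cons_append] at hs₂
      have hzW : z <+ W₀.tail := by
        cases hs₂ with
        | cons _ h' =>
          exact (List.sublist_append_right tt z).trans (my_cons_sublist_tail h')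
        | cons_cons _ h' => exact absurd rfl hhm
      exact hzT hzW
  -- final counting contradiction
  have hfin : (ScatFact k w').Finite := by
    apply Set.Finite.subset (w'.sublists.toFinset : Finset (List α)).finite_toSet
    intro x hx
    simp only [Finset.coe_sort_coe, Finset.mem_coe, List.mem_toFinset, List.mem_sublists]
    exact hx.2
  have hss : ScatFact k w ⊂ ScatFact k w' := by
    rw [Set.ssubset_def]
    constructor
    · intro x hx
      exact ⟨hx.1, hx.2.trans hsub⟩
    · intro hsup
      exact hvw (hsup ⟨hvlen, hvw'⟩).2
  have hlt := Set.ncard_lt_ncard hss hfin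
  have hmax' := hmax w' (by rw [hι', hι])
  omega
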